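/- Let R ⊂ ℝ² be a rectangle, let a, b ∈ ∂R, let ξ > 0, and let S be the generalized segment from a to b in R with parameter ξ. Then for every closed connected subset S̃ ⊂ S one has H¹(S̃) ≤ (1+ξ) · diam(S̃). -/

import Mathlib

open MeasureTheory Set Filter Metric
open scoped ENNReal Topology RealInnerProductSpace NNReal

noncomputable section

/-- The Euclidean plane `ℝ²`. -/
abbrev E2 : Type := EuclideanSpace ℝ (Fin 2)

/-- First coordinate vector. -/
def e₀ : E2 := EuclideanSpace.single 0 1
/-- Second coordinate vector. -/
def e₁ : E2 := EuclideanSpace.single 1 1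

/-- The (closed) axis-parallel rectangle `[x₁,x₂] × [y₁,y₂]`. -/
def rect (x₁ x₂ y₁ y₂ : ℝ) : Set E2 := {p : E2 | p 0 ∈ Icc x₁ x₂ ∧ p 1 ∈ Icc y₁ y₂}

/-- The four sides of the rectangle `[x₁,x₂] × [y₁,y₂]`. -/
def sideLeft (x₁ x₂ y₁ y₂ : ℝ) : Set E2 := {p : E2 | p 0 = x₁ ∧ p 1 ∈ Icc y₁ y₂}
def sideRight (x₁ x₂ y₁ y₂ : ℝ) : Set E2 := {p : E2 | p 0 = x₂ ∧ p 1 ∈ Icc y₁ y₂}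
def sideBottom (x₁ x₂ y₁ y₂ : ℝ) : Set E2 := {p : E2 | p 1 = y₁ ∧ p 0 ∈ Icc x₁ x₂}
def sideTop (x₁ x₂ y₁ y₂ : ℝ) : Set E2 := {p : E2 | p 1 = y₂ ∧ p 0 ∈ Icc x₁ x₂}

/-- The boundary of the rectangle, as the union of its four sides. -/
def rectBoundary (x₁ x₂ y₁ y₂ : ℝ) : Set E2 :=
  sideLeft x₁ x₂ y₁ y₂ ∪ sideRight x₁ x₂ y₁ y₂ ∪ sideBottom x₁ x₂ y₁ y₂ ∪ sideTop x₁ x₂ y₁ y₂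

/-- `a` and `b` lie on a common side of the rectangle, with inward unit normal `n`. -/
def OnCommonSide (x₁ x₂ y₁ y₂ : ℝ) (a b n : E2) : Prop :=
  (a ∈ sideLeft x₁ x₂ y₁ y₂ ∧ b ∈ sideLeft x₁ x₂ y₁ y₂ ∧ n = e₀) ∨
  (a ∈ sideRight x₁ x₂ y₁ y₂ ∧ b ∈ sideRight x₁ x₂ y₁ y₂ ∧ n = -e₀) ∨
  (a ∈ sideBottom x₁ x₂ y₁ y₂ ∧ b ∈ sideBottom x₁ x₂ y₁ y₂ ∧ n = e₁) ∨
  (a ∈ sideTop x₁ x₂ y₁ y₂ ∧ b ∈ sideTop x₁ x₂ y₁ y₂ ∧ n = -e₁)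

/-- `S` is the generalized segment from `a` to `b` in the rectangle `[x₁,x₂] × [y₁,y₂]`
with parameter `ξ`:  the ordinary segment `[ab]` if `a`, `b` do not lie on a common side;
otherwise the union `[aM] ∪ [Mb]`, where `M` lies inside `R` at distance `ξ|a-b|/2` from
the side containing `a` and `b` and projects onto the midpoint of `[ab]`. -/
def IsGenSegment (x₁ x₂ y₁ y₂ ξ : ℝ) (a b : E2) (S : Set E2) : Prop :=
  ((¬ ∃ n, OnCommonSide x₁ x₂ y₁ y₂ a b n) ∧ S = segment ℝ a b) ∨
  (∃ n : E2, OnCommonSide x₁ x₂ y₁ y₂ a b n ∧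
    S = segment ℝ a (midpoint ℝ a b + (ξ * dist a b / 2) • n) ∪
        segment ℝ (midpoint ℝ a b + (ξ * dist a b / 2) • n) b)

/-! ### Auxiliary lemmas -/

lemma isCompact_seg (x y : E2) : IsCompact (segment ℝ x y) := by
  rw [segment_eq_image']
  exact isCompact_Icc.image (by fun_prop)

lemma hmeas_le_diam_of_subset_segment {x y : E2} (hxy : x ≠ y) {T : Set E2}
    (hT : T ⊆ segment ℝ x y) : μH[1] T ≤ ENNReal.ofReal (Metric.diam T) := by
  have hyx : y - x ≠ 0 := sub_ne_zero.2 hxy.symm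
  set c : ℝ := ‖y - x‖ with hc
  have hc0 : c ≠ 0 := norm_ne_zero_iff.2 hyx
  set w : E2 := c⁻¹ • (y - x) with hw
  have hnw : ‖w‖ = 1 := by
    rw [hw, norm_smul, norm_inv, norm_norm, inv_mul_cancel₀ hc0]
  set f : ℝ → E2 := fun t => x + t • w with hf
  have hiso : Isometry f := by
    apply Isometry.of_dist_eq
    intro s t
    have h : f s - f t = (s - t) • w := by simp only [hf]; rw [sub_smul]; abel
    rw [dist_eq_norm, h, norm_smul, hnw, mul_one, Real.norm_eq_abs, Real.dist_eq]
  have hTr : T ⊆ Set.range f := by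
    intro z hz
    obtain ⟨θ, hθ, rfl⟩ := (segment_eq_image' ℝ x y ▸ hT hz)
    refine ⟨θ * c, ?_⟩
    simp only [hf, hw, smul_smul]
    rw [mul_assoc, mul_inv_cancel₀ hc0, mul_one]
  have himg : f '' (f ⁻¹' T) = T := Set.image_preimage_eq_of_subset hTr
  have hbdd : Bornology.IsBounded T := (isCompact_seg x y).isBounded.subset hT
  calc μH[1] T = μH[1] (f '' (f ⁻¹' T)) := by rw [himg]
    _ = μH[1] (f ⁻¹' T) := hiso.hausdorffMeasure_image (Or.inl zero_le_one) _
    _ = volume (f ⁻¹' T) := by rw [MeasureTheory.hausdorffMeasure_real]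
    _ ≤ EMetric.diam (f ⁻¹' T) := Real.volume_le_diam _
    _ = EMetric.diam (f '' (f ⁻¹' T)) := (hiso.ediam_image _).symm
    _ = EMetric.diam T := by rw [himg]
    _ = ENNReal.ofReal (Metric.diam T) := by
        rw [Metric.diam, ENNReal.ofReal_toReal hbdd.ediam_ne_top]; rfl

lemma key_real {ξ s t : ℝ} (hξ : 0 < ξ) (hs : 0 ≤ s) (ht : 0 ≤ t) :
    (s + t)^2 * (1 + ξ^2) ≤ (1+ξ)^2 * ((s^2 + t^2) * (1+ξ^2) - 2*s*t*(ξ^2-1)) := by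
  rcases le_or_gt 0 ((1+ξ)^2*(ξ^2-1)+(1+ξ^2)) with hB | hB
  · nlinarith [mul_nonneg hB (sq_nonneg (s-t)), mul_nonneg hξ.le (sq_nonneg s),
      mul_nonneg hξ.le (sq_nonneg t)]
  · nlinarith [mul_nonneg (neg_nonneg.2 hB.le) (sq_nonneg (s+t)), sq_nonneg (ξ*(1+ξ)*s),
      sq_nonneg (ξ*(1+ξ)*t), mul_nonneg (mul_nonneg hs ht) hξ.le]

lemma key_geom {u v : E2} {ξ : ℝ} (hξ : 0 < ξ) {L : ℝ} (hL : 0 < L)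
    (hu : ‖u‖^2 = L^2*(1+ξ^2)) (hv : ‖v‖^2 = L^2*(1+ξ^2))
    (huv : ⟪u, v⟫ = L^2*(ξ^2-1)) {s t : ℝ} (hs : 0 ≤ s) (ht : 0 ≤ t) :
    ‖s • u‖ + ‖t • v‖ ≤ (1+ξ) * ‖s • u - t • v‖ := by
  have hX : 0 ≤ ‖s • u‖ + ‖t • v‖ := by positivity
  have hY : 0 ≤ (1+ξ) * ‖s • u - t • v‖ := by positivity
  have hnuv : ‖u‖ * ‖v‖ = L^2*(1+ξ^2) := by
    have h1 : ‖u‖ = Real.sqrt (L^2*(1+ξ^2)) := by rw [← hu, Real.sqrt_sq (norm_nonneg _)]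
    have h2 : ‖v‖ = Real.sqrt (L^2*(1+ξ^2)) := by rw [← hv, Real.sqrt_sq (norm_nonneg _)]
    rw [h1, h2]
    exact Real.mul_self_sqrt (by positivity)
  have hsq : (‖s • u‖ + ‖t • v‖)^2 ≤ ((1+ξ) * ‖s • u - t • v‖)^2 := by
    have hd : ‖s • u - t • v‖^2 = s^2*‖u‖^2 - 2*(s*t)*⟪u,v⟫ + t^2*‖v‖^2 := by
      rw [norm_sub_sq_real, norm_smul, norm_smul, real_inner_smul_left, real_inner_smul_right,
        Real.norm_eq_abs, Real.norm_eq_abs, abs_of_nonneg hs, abs_of_nonneg ht, mul_pow, mul_pow]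
      ring
    have hexp : (‖s • u‖ + ‖t • v‖)^2 = (s+t)^2 * (L^2*(1+ξ^2)) := by
      rw [norm_smul, norm_smul, Real.norm_eq_abs, Real.norm_eq_abs, abs_of_nonneg hs,
        abs_of_nonneg ht]
      nlinarith [hu, hv, hnuv]
    have hkey := key_real (s := s) (t := t) hξ hs ht
    have hL2 : (0:ℝ) ≤ L^2 := sq_nonneg L
    rw [hexp, mul_pow, hd, hu, hv, huv]
    nlinarith [mul_le_mul_of_nonneg_left hkey hL2]
  have := Real.sqrt_le_sqrt hsq
  rwa [Real.sqrt_sq hX, Real.sqrt_sq hY] at this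

lemma ray_param {M x p : E2} (hp : p ∈ segment ℝ M x) :
    ∃ s : ℝ, 0 ≤ s ∧ s ≤ 1 ∧ p - M = s • (x - M) := by
  rw [segment_eq_image'] at hp
  obtain ⟨s, ⟨hs0, hs1⟩, rfl⟩ := hp
  exact ⟨s, hs0, hs1, by rw [add_sub_cancel_left]⟩

lemma diam_le_ray {M x : E2} {T : Set E2} (hT : T ⊆ segment ℝ M x) {p : E2} (hp : p ∈ T)
    (hmax : ∀ z ∈ T, dist z M ≤ dist p M) : Metric.diam T ≤ dist p M := by
  apply Metric.diam_le_of_forall_dist_le dist_nonneg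
  intro z hz z' hz'
  obtain ⟨s, hs0, _, hz1⟩ := ray_param (hT hz)
  obtain ⟨s', hs0', _, hz1'⟩ := ray_param (hT hz')
  have hxM : (0:ℝ) ≤ ‖x - M‖ := norm_nonneg _
  have hd : dist z z' = |s - s'| * ‖x - M‖ := by
    rw [dist_eq_norm, show z - z' = (s - s') • (x - M) by
      rw [sub_smul, ← hz1, ← hz1']; abel, norm_smul, Real.norm_eq_abs]
  have hz2 : dist z M = s * ‖x - M‖ := by
    rw [dist_eq_norm, hz1, norm_smul, Real.norm_eq_abs, abs_of_nonneg hs0]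
  have hz2' : dist z' M = s' * ‖x - M‖ := by
    rw [dist_eq_norm, hz1', norm_smul, Real.norm_eq_abs, abs_of_nonneg hs0']
  have h1 := hmax z hz; have h2 := hmax z' hz'
  rw [hz2] at h1; rw [hz2'] at h2; rw [hd]
  rcases le_total s s' with h | h
  · rw [abs_of_nonpos (by linarith)]; nlinarith
  · rw [abs_of_nonneg (by linarith)]; nlinarith

lemma onCommonSide_perp {x₁ x₂ y₁ y₂ : ℝ} {a b n : E2} (hn : OnCommonSide x₁ x₂ y₁ y₂ a b n) :
    ‖n‖ = 1 ∧ ⟪a - b, n⟫ = 0 := by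
  rcases hn with ⟨⟨ha0, _⟩, ⟨hb0, _⟩, rfl⟩ | ⟨⟨ha0, _⟩, ⟨hb0, _⟩, rfl⟩ |
    ⟨⟨ha0, _⟩, ⟨hb0, _⟩, rfl⟩ | ⟨⟨ha0, _⟩, ⟨hb0, _⟩, rfl⟩ <;>
  refine ⟨by simp [e₀, e₁], ?_⟩ <;>
  simp [e₀, e₁, inner_neg_right, EuclideanSpace.inner_single_right, PiLp.sub_apply, ha0, hb0]

/-- Let `R ⊂ ℝ²` be a rectangle, `a ≠ b ∈ ∂R`, `ξ > 0`, and let `S` be the generalized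
segment from `a` to `b` in `R` with parameter `ξ`.  Then every closed connected subset
`S̃ ⊆ S` satisfies `H¹(S̃) ≤ (1+ξ) · diam S̃`. -/
theorem genSegment_length_le (x₁ x₂ y₁ y₂ : ℝ) (hx : x₁ < x₂) (hy : y₁ < y₂)
    (ξ : ℝ) (hξ : 0 < ξ) (a b : E2)
    (ha : a ∈ rectBoundary x₁ x₂ y₁ y₂) (hb : b ∈ rectBoundary x₁ x₂ y₁ y₂) (hab : a ≠ b)
    (S : Set E2) (hS : IsGenSegment x₁ x₂ y₁ y₂ ξ a b S) :
    ∀ T : Set E2, T ⊆ S → IsClosed T → IsPreconnected T →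
      μH[1] T ≤ ENNReal.ofReal ((1 + ξ) * Metric.diam T) := by
  intro T hTS hTclosed _
  have hdnn : 0 ≤ Metric.diam T := Metric.diam_nonneg
  rcases hS with ⟨-, rfl⟩ | ⟨n, hn, rfl⟩
  · exact (hmeas_le_diam_of_subset_segment hab hTS).trans
      (ENNReal.ofReal_le_ofReal (by linarith [mul_nonneg hξ.le hdnn]))
  · obtain ⟨hn1, hn2⟩ := onCommonSide_perp hn
    set d := dist a b with hd
    have hd0 : 0 < d := dist_pos.2 hab
    set r := ξ * d / 2 with hr
    have hr0 : 0 < r := by rw [hr]; positivity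
    set M := midpoint ℝ a b + r • n with hM
    have hmid : midpoint ℝ a b = (2:ℝ)⁻¹ • (a + b) := by
      rw [midpoint_eq_smul_add, invOf_eq_inv]
    have hu : a - M = (2:ℝ)⁻¹ • (a - b) - r • n := by rw [hM, hmid]; module
    have hv : b - M = (-(2:ℝ)⁻¹) • (a - b) - r • n := by rw [hM, hmid]; module
    have hab_norm : ‖a - b‖ = d := (dist_eq_norm a b).symm
    have hL : (0:ℝ) < d/2 := by linarith
    have hnormu : ‖a - M‖^2 = (d/2)^2*(1+ξ^2) := by
      rw [hu, norm_sub_sq_real, real_inner_smul_left, real_inner_smul_right, hn2,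
        norm_smul, norm_smul, hab_norm, hn1, Real.norm_eq_abs, Real.norm_eq_abs,
        abs_of_nonneg (by norm_num : (0:ℝ) ≤ (2:ℝ)⁻¹), abs_of_nonneg hr0.le, hr]
      ring
    have hnormv : ‖b - M‖^2 = (d/2)^2*(1+ξ^2) := by
      rw [hv, norm_sub_sq_real, real_inner_smul_left, real_inner_smul_right, hn2,
        norm_smul, norm_smul, hab_norm, hn1, Real.norm_eq_abs, Real.norm_eq_abs,
        abs_of_nonpos (by norm_num : (-(2:ℝ)⁻¹) ≤ 0), abs_of_nonneg hr0.le, hr]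
      ring
    have hww : ⟪a - b, a - b⟫ = d^2 := by
      rw [real_inner_self_eq_norm_sq, hab_norm]
    have hnn : ⟪n, n⟫ = 1 := by rw [real_inner_self_eq_norm_sq, hn1]; norm_num
    have hnw : ⟪n, a - b⟫ = 0 := by rw [real_inner_comm]; exact hn2
    have hinner : ⟪a - M, b - M⟫ = (d/2)^2*(ξ^2-1) := by
      rw [hu, hv, inner_sub_left, inner_sub_right, inner_sub_right,
        real_inner_smul_left, real_inner_smul_right, real_inner_smul_left,
        real_inner_smul_right, real_inner_smul_left, real_inner_smul_left,
        real_inner_smul_right, real_inner_smul_right, hww, hnn, hn2, hnw, hr]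
      ring
    have haM : a ≠ M := by
      intro h
      rw [h, sub_self] at hnormu
      simp only [norm_zero] at hnormu
      nlinarith
    have hMb : M ≠ b := by
      intro h
      rw [← h, sub_self] at hnormv
      simp only [norm_zero] at hnormv
      nlinarith
    by_cases hT1 : T ⊆ segment ℝ a M
    · exact (hmeas_le_diam_of_subset_segment haM hT1).trans
        (ENNReal.ofReal_le_ofReal (by linarith [mul_nonneg hξ.le hdnn]))
    by_cases hT2 : T ⊆ segment ℝ M b
    · exact (hmeas_le_diam_of_subset_segment hMb hT2).trans
        (ENNReal.ofReal_le_ofReal (by linarith [mul_nonneg hξ.le hdnn]))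
    obtain ⟨z1, hz1T, hz1n⟩ := not_subset.mp hT1
    obtain ⟨z2, hz2T, hz2n⟩ := not_subset.mp hT2
    set T₁ := T ∩ segment ℝ a M with hT₁
    set T₂ := T ∩ segment ℝ M b with hT₂
    have hT1ne : T₁.Nonempty := ⟨z2, hz2T, (hTS hz2T).resolve_right hz2n⟩
    have hT2ne : T₂.Nonempty := ⟨z1, hz1T, (hTS hz1T).resolve_left hz1n⟩
    have hTcomp : IsCompact T :=
      ((isCompact_seg a M).union (isCompact_seg M b)).of_isClosed_subset hTclosed hTS
    have hT1c : IsCompact T₁ := hTcomp.inter_right (isCompact_seg a M).isClosed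
    have hT2c : IsCompact T₂ := hTcomp.inter_right (isCompact_seg M b).isClosed
    have hcont : Continuous fun z : E2 => dist z M := continuous_id.dist continuous_const
    obtain ⟨p, hpT1, hpmax⟩ := hT1c.exists_isMaxOn hT1ne hcont.continuousOn
    obtain ⟨q, hqT2, hqmax⟩ := hT2c.exists_isMaxOn hT2ne hcont.continuousOn
    have hT1seg : T₁ ⊆ segment ℝ M a := by
      rw [hT₁, segment_symm]; exact inter_subset_right
    have hT2seg : T₂ ⊆ segment ℝ M b := inter_subset_right
    obtain ⟨s, hs0, _, hps⟩ := ray_param (hT1seg hpT1)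
    obtain ⟨t, ht0, _, hqt⟩ := ray_param (hT2seg hqT2)
    have hdiam1 : Metric.diam T₁ ≤ dist p M := diam_le_ray hT1seg hpT1 (isMaxOn_iff.mp hpmax)
    have hdiam2 : Metric.diam T₂ ≤ dist q M := diam_le_ray hT2seg hqT2 (isMaxOn_iff.mp hqmax)
    have hkey : dist p M + dist q M ≤ (1+ξ) * dist p q := by
      have h1 : dist p M = ‖s • (a - M)‖ := by rw [dist_eq_norm, hps]
      have h2 : dist q M = ‖t • (b - M)‖ := by rw [dist_eq_norm, hqt]
      have h3 : dist p q = ‖s • (a - M) - t • (b - M)‖ := by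
        rw [dist_eq_norm, show p - q = (p - M) - (q - M) by abel, hps, hqt]
      rw [h1, h2, h3]
      exact key_geom hξ hL hnormu hnormv hinner hs0 ht0
    have hpq : dist p q ≤ Metric.diam T :=
      dist_le_diam_of_mem hTcomp.isBounded hpT1.1 hqT2.1
    have hTsplit : T = T₁ ∪ T₂ := by
      have h := inter_eq_self_of_subset_left hTS
      rw [inter_union_distrib_left] at h
      exact h.symm
    calc μH[1] T ≤ μH[1] T₁ + μH[1] T₂ := hTsplit ▸ measure_union_le _ _
      _ ≤ ENNReal.ofReal (Metric.diam T₁) + ENNReal.ofReal (Metric.diam T₂) :=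
          add_le_add (hmeas_le_diam_of_subset_segment haM inter_subset_right)
            (hmeas_le_diam_of_subset_segment hMb inter_subset_right)
      _ ≤ ENNReal.ofReal (dist p M) + ENNReal.ofReal (dist q M) :=
          add_le_add (ENNReal.ofReal_le_ofReal hdiam1) (ENNReal.ofReal_le_ofReal hdiam2)
      _ = ENNReal.ofReal (dist p M + dist q M) :=
          (ENNReal.ofReal_add dist_nonneg dist_nonneg).symm
      _ ≤ ENNReal.ofReal ((1 + ξ) * Metric.diam T) := by
          refine ENNReal.ofReal_le_ofReal (hkey.trans ?_)
          exact mul_le_mul_of_nonneg_left hpq (by linarith)
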